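/- For every metric space X one has hypdim′ X ≤ hypdim X, where hypdim′ is defined using d-multiplicity in place of multiplicity. -/
import Mathlib


open Metric Set ENNReal

/-- A subset `A` of a metric space is `(N,R)`-bounded: for every `ρ ∈ (0,1)` and every
`r ≥ R ρ`, every ball of radius `r` in `A` (with the induced metric) contains at most
`N ρ` points that are pairwise at distance `≥ ρ·r`. -/
def SubsetNRBounded {X : Type*} [MetricSpace X] (A : Set X) (N : ℝ → ℕ) (R : ℝ → ℝ) : Prop :=
  ∀ ρ : ℝ, 0 < ρ → ρ < 1 → ∀ r : ℝ, R ρ ≤ r → ∀ a ∈ A, ∀ S : Finset X,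
    (S : Set X) ⊆ A ∩ Metric.closedBall a r →
    ((S : Set X).Pairwise fun p q => ρ * r ≤ dist p q) → S.card ≤ N ρ

/-- A metric space is `(N,R)`-bounded. -/
def IsNRBounded (X : Type*) [MetricSpace X] (N : ℝ → ℕ) (R : ℝ → ℝ) : Prop :=
  SubsetNRBounded (Set.univ : Set X) N R

/-- A metric space has uniformly bounded growth rate (is an UBG-space) if it is
`(N,R)`-bounded for some `N ∈ 𝒩` and `R ∈ ℛ`. -/
def IsUBG (X : Type*) [MetricSpace X] : Prop :=
  ∃ N : ℝ → ℕ, ∃ R : ℝ → ℝ, (∀ ρ, 0 ≤ R ρ) ∧ IsNRBounded X N R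

/-- A subset is `N`-bounded if it is `(N,R)`-bounded for some `R ∈ ℛ`. -/
def SubsetNBounded {X : Type*} [MetricSpace X] (A : Set X) (N : ℝ → ℕ) : Prop :=
  ∃ R : ℝ → ℝ, (∀ ρ, 0 ≤ R ρ) ∧ SubsetNRBounded A N R

/-- A covering `𝒰` is uniformly `N`-bounded: all its elements are `(N,R)`-bounded for one
common `R ∈ ℛ`, and every finite union of its elements is `N`-bounded. -/
def UniformlyNBounded {X : Type*} [MetricSpace X] (𝒰 : Set (Set X)) (N : ℝ → ℕ) : Prop :=
  (∃ R : ℝ → ℝ, (∀ ρ, 0 ≤ R ρ) ∧ ∀ U ∈ 𝒰, SubsetNRBounded U N R) ∧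
  ∀ F : Finset (Set X), ↑F ⊆ 𝒰 → SubsetNBounded (⋃₀ (F : Set (Set X))) N

/-- The Lebesgue number of a covering: `L(𝒰) = inf_x sup_{U ∈ 𝒰} dist (x, X∖U)`. -/
noncomputable def LebesgueNumber {X : Type*} [MetricSpace X] (𝒰 : Set (Set X)) : ℝ≥0∞ :=
  ⨅ x : X, ⨆ U ∈ 𝒰, EMetric.infEdist x Uᶜ

/-- The multiplicity of a covering is `≤ m`: every point belongs to at most `m` of its
elements. -/
def MultiplicityLE {X : Type*} [MetricSpace X] (𝒰 : Set (Set X)) (m : ℕ) : Prop :=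
  ∀ x : X, ∀ F : Finset (Set X), ↑F ⊆ 𝒰 → (∀ U ∈ F, x ∈ U) → F.card ≤ m

/-- `HypdimLE X n`: for every `d > 0` there are `N ∈ 𝒩` and a covering of `X` with
Lebesgue number `≥ d` and multiplicity `≤ n+1` which is uniformly `N`-bounded. -/
def HypdimLE (X : Type*) [MetricSpace X] (n : ℕ) : Prop :=
  ∀ d : ℝ, 0 < d → ∃ N : ℝ → ℕ, ∃ 𝒰 : Set (Set X),
    ⋃₀ 𝒰 = Set.univ ∧ UniformlyNBounded 𝒰 N ∧
    ENNReal.ofReal d ≤ LebesgueNumber 𝒰 ∧ MultiplicityLE 𝒰 (n + 1)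

/-- The hyperbolic dimension of a metric space. -/
noncomputable def hypdim (X : Type*) [MetricSpace X] : ℕ∞ :=
  sInf {k : ℕ∞ | ∃ n : ℕ, k = n ∧ HypdimLE X n}


/-- The `d`-multiplicity of a covering is `≤ m`: no ball of radius `d` meets more than
`m` elements of the covering. -/
def DMultiplicityLE {X : Type*} [MetricSpace X] (𝒰 : Set (Set X)) (d : ℝ) (m : ℕ) : Prop :=
  ∀ x : X, ∀ F : Finset (Set X), ↑F ⊆ 𝒰 →
    (∀ U ∈ F, (U ∩ Metric.ball x d).Nonempty) → F.card ≤ m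

/-- `HypdimAuxLE X n`: for every `d > 0` there are `N ∈ 𝒩` and a uniformly `N`-bounded
covering of `X` with `d`-multiplicity `≤ n+1`. -/
def HypdimAuxLE (X : Type*) [MetricSpace X] (n : ℕ) : Prop :=
  ∀ d : ℝ, 0 < d → ∃ N : ℝ → ℕ, ∃ 𝒰 : Set (Set X),
    ⋃₀ 𝒰 = Set.univ ∧ UniformlyNBounded 𝒰 N ∧ DMultiplicityLE 𝒰 d (n + 1)

/-- The auxiliary hyperbolic dimension, defined via `d`-multiplicity. -/
noncomputable def hypdimAux (X : Type*) [MetricSpace X] : ℕ∞ :=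
  sInf {k : ℕ∞ | ∃ n : ℕ, k = n ∧ HypdimAuxLE X n}


lemma subsetNRBounded_mono {X : Type*} [MetricSpace X] {A B : Set X} {N : ℝ → ℕ} {R : ℝ → ℝ}
    (hAB : A ⊆ B) (hB : SubsetNRBounded B N R) : SubsetNRBounded A N R := by
  intro ρ hρ0 hρ1 r hr a ha S hS hP
  exact hB ρ hρ0 hρ1 r hr a (hAB ha) S
    (hS.trans (Set.inter_subset_inter_left _ hAB)) hP

lemma subsetNBounded_mono {X : Type*} [MetricSpace X] {A B : Set X} {N : ℝ → ℕ}
    (hAB : A ⊆ B) (hB : SubsetNBounded B N) : SubsetNBounded A N := by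
  obtain ⟨R, hR, h⟩ := hB
  exact ⟨R, hR, subsetNRBounded_mono hAB h⟩

lemma hypdimAuxLE_of_hypdimLE {X : Type*} [MetricSpace X] {n : ℕ}
    (h : HypdimLE X n) : HypdimAuxLE X n := by
  intro d hd
  obtain ⟨N, 𝒰, hcov, hunif, hleb, hmult⟩ := h (3 * d) (by linarith)
  classical
  set shrink : Set X → Set X := fun U => {x | ENNReal.ofReal (2 * d) < EMetric.infEdist x Uᶜ}
    with hshrink
  have hsub : ∀ U : Set X, shrink U ⊆ U := by
    intro U x hx
    by_contra hxU
    have h0 : EMetric.infEdist x Uᶜ = 0 := EMetric.infEdist_zero_of_mem hxU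
    have hx' : ENNReal.ofReal (2 * d) < EMetric.infEdist x Uᶜ := hx
    rw [h0] at hx'
    exact absurd hx' (by simp)
  set 𝒱 : Set (Set X) := shrink '' 𝒰 with h𝒱
  -- choice function
  set g : Set X → Set X := fun V =>
    if h : ∃ U ∈ 𝒰, shrink U = V then h.choose else ∅ with hg
  have hgspec : ∀ V ∈ 𝒱, g V ∈ 𝒰 ∧ shrink (g V) = V := by
    intro V hV
    obtain ⟨U, hU, hUV⟩ := hV
    have hex : ∃ U ∈ 𝒰, shrink U = V := ⟨U, hU, hUV⟩
    simp only [hg, dif_pos hex]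
    exact ⟨hex.choose_spec.1, hex.choose_spec.2⟩
  refine ⟨N, 𝒱, ?_, ?_, ?_⟩
  · -- covering
    apply Set.eq_univ_of_forall
    intro x
    have h1 : ENNReal.ofReal (3 * d) ≤ ⨆ U ∈ 𝒰, EMetric.infEdist x Uᶜ :=
      le_trans hleb (iInf_le _ x)
    have h2 : ENNReal.ofReal (2 * d) < ⨆ U ∈ 𝒰, EMetric.infEdist x Uᶜ :=
      lt_of_lt_of_le (by rw [ENNReal.ofReal_lt_ofReal_iff (by linarith)]; linarith) h1
    rw [lt_iSup_iff] at h2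
    obtain ⟨U, hU⟩ := h2
    rw [lt_iSup_iff] at hU
    obtain ⟨hU𝒰, hUx⟩ := hU
    exact ⟨shrink U, ⟨U, hU𝒰, rfl⟩, hUx⟩
  · -- uniformly N-bounded
    obtain ⟨⟨R, hR, hURb⟩, hfin⟩ := hunif
    constructor
    · refine ⟨R, hR, ?_⟩
      intro V hV
      obtain ⟨hgV, hVeq⟩ := hgspec V hV
      have hVg : V ⊆ g V := by
        have h' := hsub (g V); rw [hVeq] at h'; exact h'
      exact subsetNRBounded_mono hVg (hURb _ hgV)
    · intro F hF
      have hF' : ↑(F.image g) ⊆ 𝒰 := by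
        intro U hU
        simp only [Finset.coe_image, Set.mem_image] at hU
        obtain ⟨V, hV, rfl⟩ := hU
        exact (hgspec V (hF hV)).1
      have hsubU : ⋃₀ (F : Set (Set X)) ⊆ ⋃₀ ((F.image g : Finset (Set X)) : Set (Set X)) := by
        intro x hx
        obtain ⟨V, hV, hxV⟩ := hx
        refine ⟨g V, ?_, ?_⟩
        · simp only [Finset.coe_image]; exact ⟨V, hV, rfl⟩
        · obtain ⟨_, hVeq⟩ := hgspec V (hF hV)
          rw [← hVeq] at hxV
          exact hsub (g V) hxV
      exact subsetNBounded_mono hsubU (hfin _ hF')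
  · -- d-multiplicity
    intro x F hF hmeet
    have hinj : Set.InjOn g ↑F := by
      intro V₁ h₁ V₂ h₂ heq
      have e₁ := (hgspec V₁ (hF h₁)).2
      have e₂ := (hgspec V₂ (hF h₂)).2
      rw [← e₁, ← e₂, heq]
    rw [← Finset.card_image_of_injOn hinj]
    apply hmult x (F.image g)
    · intro U hU
      simp only [Finset.coe_image, Set.mem_image] at hU
      obtain ⟨V, hV, rfl⟩ := hU
      exact (hgspec V (hF hV)).1
    · intro U hU
      simp only [Finset.mem_image] at hU
      obtain ⟨V, hV, rfl⟩ := hU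
      obtain ⟨hgV, hVeq⟩ := hgspec V (hF hV)
      obtain ⟨y, hyV, hyball⟩ := hmeet V hV
      by_contra hxU
      have h1 : EMetric.infEdist y (g V)ᶜ ≤ edist y x := EMetric.infEdist_le_edist_of_mem hxU
      have h2 : edist y x < ENNReal.ofReal d := by
        rw [edist_dist]
        exact ENNReal.ofReal_lt_ofReal_iff hd |>.2 (mem_ball.mp hyball)
      rw [← hVeq] at hyV
      have h3 : ENNReal.ofReal (2 * d) < EMetric.infEdist y (g V)ᶜ := hyV
      have h4 : ENNReal.ofReal d ≤ ENNReal.ofReal (2 * d) :=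
        ENNReal.ofReal_le_ofReal (by linarith)
      exact absurd ((h1.trans_lt h2).trans_le h4) (not_lt.mpr h3.le)

/-- Lemma 5.1: `hypdim′ X ≤ hypdim X` for every metric space. -/
theorem hypdimAux_le_hypdim (X : Type*) [MetricSpace X] : hypdimAux X ≤ hypdim X := by
  apply sInf_le_sInf
  rintro k ⟨n, hk, h⟩
  exact ⟨n, hk, hypdimAuxLE_of_hypdimLE h⟩
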